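/- The fee-adjusted constant-product swap rate satisfies the generalized additivity identity: for x, y > 0 and r0, r1 > 0, SX(x+y, r0, r1) = ((α·x + β·y)/(x+y)) · Z, where α = SX(x, r0, r1), β = SX(y, r0+x, r1−α·x), and Z = [((φ·r1·x)(r0 + φ·x + φ·y) + φ·r1·r0·y)·(r0 + x + φ·y)] / [(r0 + φ·x + φ·y)·((φ·r1·x)(r0 + x + φ·y) + φ·r1·r0·y)]. -/

import Mathlib

theorem stmt5 (φ x y r0 r1 : ℝ) (hφ0 : 0 < φ) (hφ1 : φ ≤ 1)
    (hx : 0 < x) (hy : 0 < y) (hr0 : 0 < r0) (hr1 : 0 < r1) :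
    let α := φ * r1 / (r0 + φ * x)
    let β := φ * (r1 - α * x) / ((r0 + x) + φ * y)
    let Z := ((φ * r1 * x) * (r0 + φ * x + φ * y) + φ * r1 * r0 * y) * (r0 + x + φ * y) /
      ((r0 + φ * x + φ * y) * ((φ * r1 * x) * (r0 + x + φ * y) + φ * r1 * r0 * y))
    φ * r1 / (r0 + φ * (x + y)) = ((α * x + β * y) / (x + y)) * Z := by
  intro α β Z
  have h1 : (0:ℝ) < r0 + φ * x := by positivity
  have h2 : (0:ℝ) < r0 + x + φ * y := by positivity
  have h3 : (0:ℝ) < r0 + φ * x + φ * y := by positivity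
  have h4 : (0:ℝ) < r0 + φ * (x + y) := by positivity
  have h5 : (0:ℝ) < (φ * r1 * x) * (r0 + x + φ * y) + φ * r1 * r0 * y := by positivity
  have h6 : (0:ℝ) < x + y := by positivity
  show φ * r1 / (r0 + φ * (x + y)) = ((α * x + β * y) / (x + y)) * Z
  unfold β α Z
  field_simp
  ring
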